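/- Any maximal pairwise anticommuting subset A of a Pauli group (a subgroup of the n-qubit Pauli group consisting of ± Pauli strings) has odd cardinality. -/

import Mathlib

/-- The Pauli matrices `σ₀ = I, σ₁ = X, σ₂ = Y, σ₃ = Z`. -/
def pauliMat : Fin 4 → Matrix (Fin 2) (Fin 2) ℂ :=
  ![1, !![0, 1; 1, 0], !![0, -Complex.I; Complex.I, 0], !![1, 0; 0, -1]]

/-- The `n`-qubit Pauli string `σ_{a 0} ⊗ ⋯ ⊗ σ_{a (n-1)}`, as an operator on
`(ℂ²)^{⊗ n}`, realized as a matrix indexed by `Fin n → Fin 2`. -/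
def pauliString (n : ℕ) (a : Fin n → Fin 4) :
    Matrix (Fin n → Fin 2) (Fin n → Fin 2) ℂ :=
  Matrix.of fun f g => ∏ k, pauliMat (a k) (f k) (g k)

lemma pauliMat_sq (i : Fin 4) : pauliMat i * pauliMat i = 1 := by
  fin_cases i <;>
    simp [pauliMat, Matrix.mul_fin_two, Matrix.one_fin_two, Complex.I_mul_I]

lemma pauliString_sq (n : ℕ) (a : Fin n → Fin 4) :
    pauliString n a * pauliString n a = 1 := by
  ext f g
  rw [Matrix.mul_apply]
  simp only [pauliString, Matrix.of_apply]
  have : ∀ h : Fin n → Fin 2,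
      (∏ k, pauliMat (a k) (f k) (h k)) * ∏ k, pauliMat (a k) (h k) (g k)
      = ∏ k, pauliMat (a k) (f k) (h k) * pauliMat (a k) (h k) (g k) := fun h =>
    (Finset.prod_mul_distrib).symm
  simp_rw [this]
  rw [← Fintype.piFinset_univ, ← Finset.prod_univ_sum (fun _ => Finset.univ)
    (fun k j => pauliMat (a k) (f k) j * pauliMat (a k) j (g k))]
  have : ∀ k, (∑ j, pauliMat (a k) (f k) j * pauliMat (a k) j (g k))
      = (1 : Matrix (Fin 2) (Fin 2) ℂ) (f k) (g k) := by
    intro k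
    rw [← pauliMat_sq (a k), Matrix.mul_apply]
  simp_rw [this]
  by_cases hfg : f = g
  · subst hfg; simp [Matrix.one_apply]
  · obtain ⟨k, hk⟩ := Function.ne_iff.mp hfg
    rw [Matrix.one_apply_ne hfg]
    exact Finset.prod_eq_zero (Finset.mem_univ k) (Matrix.one_apply_ne hk)

/-- Any maximal pairwise anticommuting subset `A` of a Pauli group (a subgroup `G` of the
`n`-qubit Pauli group consisting of `±` Pauli strings) has odd cardinality. -/
theorem maximal_anticommuting_subset_odd_card (n : ℕ)
    (G : Set (Matrix (Fin n → Fin 2) (Fin n → Fin 2) ℂ))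
    -- G consists of ± Pauli strings
    (hGP : ∀ g ∈ G, ∃ (ε : ℂ) (a : Fin n → Fin 4), (ε = 1 ∨ ε = -1) ∧ g = ε • pauliString n a)
    -- G is a subgroup: contains identity and is closed under multiplication
    (hone : (1 : Matrix (Fin n → Fin 2) (Fin n → Fin 2) ℂ) ∈ G)
    (hmul : ∀ g ∈ G, ∀ h ∈ G, g * h ∈ G)
    (A : Finset (Matrix (Fin n → Fin 2) (Fin n → Fin 2) ℂ))
    (hAG : ↑A ⊆ G)
    -- all distinct elements of A anticommute
    (hanti : ∀ g ∈ A, ∀ h ∈ A, g ≠ h → g * h = -(h * g))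
    -- maximality: no element of G \ (±A) anticommutes with every element of A
    (hmax : ∀ g ∈ G, g ∉ A → -g ∉ A → ¬(∀ h ∈ A, g * h = -(h * g))) :
    Odd A.card := by
  -- every element of G squares to 1
  have hsq : ∀ g ∈ G, g * g = 1 := by
    intro g hg
    obtain ⟨ε, a, hε, rfl⟩ := hGP g hg
    rw [Matrix.smul_mul, Matrix.mul_smul, smul_smul, pauliString_sq]
    rcases hε with rfl | rfl <;> norm_num
  by_contra hodd
  rw [Nat.not_odd_iff_even] at hodd
  -- A is nonempty
  have hne : A.Nonempty := by
    rcases A.eq_empty_or_nonempty with rfl | h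
    · exact absurd (fun h hh => absurd hh (by simp)) (hmax 1 hone (by simp) (by simp))
    · exact h
  -- lemma : h anticommutes with product of list avoiding h
  have L1 : ∀ (h : Matrix (Fin n → Fin 2) (Fin n → Fin 2) ℂ), h ∈ A → ∀ l : List (Matrix (Fin n → Fin 2) (Fin n → Fin 2) ℂ), (∀ x ∈ l, x ∈ A) → h ∉ l →
      h * l.prod = (-1 : ℂ) ^ l.length • (l.prod * h) := by
    intro h hh l
    induction l with
    | nil => simp
    | cons x t ih =>
      intro hall hnm
      have hx : x ∈ A := hall x (List.mem_cons_self (a := x) (l := t))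
      have hxh : x ≠ h := fun e => hnm (e ▸ List.mem_cons_self (a := x) (l := t))
      have hax : h * x = -(x * h) := hanti h hh x hx (Ne.symm hxh)
      have iht := ih (fun y hy => hall y (List.mem_cons_of_mem x hy))
        (fun hm => hnm (List.mem_cons_of_mem x hm))
      calc h * (x :: t).prod = (h * x) * t.prod := by rw [List.prod_cons, mul_assoc]
        _ = -(x * (h * t.prod)) := by rw [hax]; noncomm_ring
        _ = -(x * ((-1 : ℂ) ^ t.length • (t.prod * h))) := by rw [iht]
        _ = (-1 : ℂ) ^ (x :: t).length • ((x :: t).prod * h) := by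
            simp [List.length_cons, pow_succ, mul_smul_comm, mul_assoc]
  have L2 : ∀ (h : Matrix (Fin n → Fin 2) (Fin n → Fin 2) ℂ), h ∈ A → ∀ l : List (Matrix (Fin n → Fin 2) (Fin n → Fin 2) ℂ), l.Nodup → (∀ x ∈ l, x ∈ A) → h ∈ l →
      h * l.prod = (-1 : ℂ) ^ (l.length - 1) • (l.prod * h) := by
    intro h hh l
    induction l with
    | nil => intro _ _ hm; simp at hm
    | cons x t ih =>
      intro hnd hall hm
      have hx : x ∈ A := hall x (List.mem_cons_self (a := x) (l := t))
      rcases List.mem_cons.mp hm with rfl | hmt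
      · have hnt : h ∉ t := (List.nodup_cons.mp hnd).1
        calc h * (h :: t).prod = h * (h * t.prod) := by rw [List.prod_cons]
          _ = h * ((-1 : ℂ) ^ t.length • (t.prod * h)) := by
              rw [L1 h hh t (fun y hy => hall y (List.mem_cons_of_mem h hy)) hnt]
          _ = (-1 : ℂ) ^ ((h :: t).length - 1) • ((h :: t).prod * h) := by
              simp [mul_smul_comm, mul_assoc]
      · have hxh : x ≠ h := fun e => (List.nodup_cons.mp hnd).1 (e ▸ hmt)
        have hax : h * x = -(x * h) := hanti h hh x hx (Ne.symm hxh)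
        have ht1 : 1 ≤ t.length := List.length_pos_iff.mpr (List.ne_nil_of_mem hmt)
        have iht := ih (List.nodup_cons.mp hnd).2
          (fun y hy => hall y (List.mem_cons_of_mem x hy)) hmt
        calc h * (x :: t).prod = (h * x) * t.prod := by rw [List.prod_cons, mul_assoc]
          _ = -(x * (h * t.prod)) := by rw [hax]; noncomm_ring
          _ = -(x * ((-1 : ℂ) ^ (t.length - 1) • (t.prod * h))) := by rw [iht]
          _ = (-1 : ℂ) ^ (t.length - 1 + 1) • ((x :: t).prod * h) := by
              simp [pow_succ, mul_smul_comm, mul_assoc]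
          _ = (-1 : ℂ) ^ ((x :: t).length - 1) • ((x :: t).prod * h) := by
              rw [Nat.sub_add_cancel ht1]; simp
  -- the product of all elements of A
  set l := A.toList with hl
  set g := l.prod with hg
  have hgG : g ∈ G := by
    have : ∀ m : List (Matrix (Fin n → Fin 2) (Fin n → Fin 2) ℂ), (∀ x ∈ m, x ∈ G) → m.prod ∈ G := by
      intro m
      induction m with
      | nil => simpa using hone
      | cons x t ih =>
        intro hall
        rw [List.prod_cons]
        exact hmul x (hall x (List.mem_cons_self (a := x) (l := t))) t.prod
          (ih fun y hy => hall y (List.mem_cons_of_mem x hy))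
    exact this l fun x hx => hAG (Finset.mem_toList.mp hx)
  -- g anticommutes with every element of A
  have hgA : ∀ h ∈ A, g * h = -(h * g) := by
    intro h hh
    have := L2 h hh l A.nodup_toList (fun x hx => Finset.mem_toList.mp hx)
      (Finset.mem_toList.mpr hh)
    rw [Finset.length_toList] at this
    have hodd1 : Odd (A.card - 1) := Nat.Even.sub_odd hne.card_pos hodd odd_one
    rw [hodd1.neg_one_pow, neg_one_smul] at this
    rw [this, neg_neg]
  -- maximality forces g ∈ A or -g ∈ A
  have key : g ∈ A ∨ -g ∈ A := by
    by_contra hc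
    push_neg at hc
    exact hmax g hgG hc.1 hc.2 hgA
  have h1 : (1 : Matrix (Fin n → Fin 2) (Fin n → Fin 2) ℂ) ≠ -1 := by
    intro h
    have := congrFun (congrFun h (fun _ => 0)) (fun _ => 0)
    simp [Matrix.one_apply, Matrix.neg_apply] at this
    norm_num at this
  rcases key with hgA' | hgA'
  · have := hgA g hgA'
    rw [hsq g hgG] at this
    exact h1 this
  · have := hgA (-g) hgA'
    rw [mul_neg, neg_mul, neg_neg, hsq g hgG] at this
    exact h1 this.symm
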